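/- Let G be a finite simple graph with vertex set V and let k be a natural number. For a function F : Fin k → V, let c_F : V → ℕ be the configuration c_F(v) = #{i : F(i) = v}. Then for any F, G' : Fin k → V, the configurations c_F and c_{G'} are adjacent in the pebble configuration graph G[k] if and only if c_F ≠ c_{G'} and there exists a permutation σ of Fin k such that for every i, either F(i) = G'(σ(i)) or F(i) is adjacent to G'(σ(i)) in G (i.e., F and G'∘σ are equal or adjacent in the k-fold strong power G^{⊠k}). -/

import Mathlib

open Finset

/-- A configuration of `k` identical pebbles on the vertex set `V`. -/
def Config (V : Type*) [Fintype V] (k : ℕ) : Type _ :=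
  {f : V → ℕ // ∑ v, f v = k}

/-- The pebble configuration graph `G[k]`: two distinct configurations are adjacent
iff there is a transport `m` moving each pebble along an edge of `G` or keeping it in place. -/
def PebbleGraph {V : Type*} [Fintype V] (G : SimpleGraph V) (k : ℕ) :
    SimpleGraph (Config V k) where
  Adj f g := f ≠ g ∧ ∃ m : V → V → ℕ,
    (∀ u w, m u w ≠ 0 → u = w ∨ G.Adj u w) ∧
    (∀ u, ∑ w, m u w = f.1 u) ∧ (∀ u, ∑ w, m w u = g.1 u)
  symm := ⟨by
    rintro f g ⟨hne, m, h1, h2, h3⟩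
    exact ⟨hne.symm, fun u w => m w u,
      fun u w h => (h1 w u h).imp Eq.symm fun h => G.symm.symm _ _ h, h3, h2⟩⟩
  loopless := ⟨fun f h => h.1 rfl⟩

/-- The independence number of a graph: the supremum of sizes of finite sets of
pairwise non-adjacent vertices. -/
noncomputable def indepNum {W : Type*} (G : SimpleGraph W) : ℕ :=
  sSup {n | ∃ s : Finset W, (↑s : Set W).Pairwise (fun a b => ¬ G.Adj a b) ∧ s.card = n}

/-- The 5-cycle on vertices `Fin 5`, with `u` adjacent to `u + 1` (mod 5). -/
def C5 : SimpleGraph (Fin 5) where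
  Adj u w := u ≠ w ∧ (w = u + 1 ∨ u = w + 1)
  symm := ⟨fun _ _ h => ⟨h.1.symm, h.2.symm⟩⟩
  loopless := ⟨fun _ h => h.1 rfl⟩

/-- The configuration counting the fibers of a map `F : Fin k → V`. -/
def toConfig {V : Type*} [Fintype V] [DecidableEq V] {k : ℕ} (F : Fin k → V) :
    Config V k :=
  ⟨fun v => (Finset.univ.filter fun i => F i = v).card, by
    rw [← Finset.card_eq_sum_card_fiberwise fun x _ => Finset.mem_univ (F x)]
    simp⟩

/-- `c_F` and `c_{G'}` are adjacent in `G[k]` iff `c_F ≠ c_{G'}` and some permutation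
`σ` of `Fin k` makes `F` and `G' ∘ σ` equal or adjacent in the strong power `G^{⊠k}`. -/
theorem pebble_adj_iff_strongPower {V : Type*} [Fintype V] [DecidableEq V]
    (G : SimpleGraph V) (k : ℕ) (F G' : Fin k → V) :
    (PebbleGraph G k).Adj (toConfig F) (toConfig G') ↔
      toConfig F ≠ toConfig G' ∧
        ∃ σ : Equiv.Perm (Fin k), ∀ i, F i = G' (σ i) ∨ G.Adj (F i) (G' (σ i)) := by

  classical
  constructor
  · rintro ⟨hne, m, hm, hrow, hcol⟩
    refine ⟨hne, ?_⟩
    have hcardF : ∀ u : V, Fintype.card {i : Fin k // F i = u} = ∑ w, m u w := by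
      intro u
      rw [Fintype.card_subtype, hrow u]
      rfl
    have hcardG : ∀ w : V, Fintype.card {j : Fin k // G' j = w} = ∑ u, m u w := by
      intro w
      rw [Fintype.card_subtype, hcol w]
      rfl
    let e2 : ∀ u : V, {i : Fin k // F i = u} ≃ Σ w : V, Fin (m u w) := fun u =>
      Fintype.equivOfCardEq (by simp [Fintype.card_sigma, hcardF u])
    let e3 : ∀ w : V, {j : Fin k // G' j = w} ≃ Σ u : V, Fin (m u w) := fun w =>
      Fintype.equivOfCardEq (by simp [Fintype.card_sigma, hcardG w])
    let eL : Fin k ≃ Σ u : V, Σ w : V, Fin (m u w) :=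
      (Equiv.sigmaFiberEquiv F).symm.trans (Equiv.sigmaCongrRight e2)
    let eR : Fin k ≃ Σ w : V, Σ u : V, Fin (m u w) :=
      (Equiv.sigmaFiberEquiv G').symm.trans (Equiv.sigmaCongrRight e3)
    let sw : (Σ u : V, Σ w : V, Fin (m u w)) ≃ (Σ w : V, Σ u : V, Fin (m u w)) :=
      { toFun := fun x => ⟨x.2.1, x.1, x.2.2⟩
        invFun := fun x => ⟨x.2.1, x.1, x.2.2⟩
        left_inv := fun ⟨u, w, x⟩ => rfl
        right_inv := fun ⟨w, u, x⟩ => rfl }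
    refine ⟨eL.trans (sw.trans eR.symm), fun i => ?_⟩
    have hL : (eL i).1 = F i := rfl
    have hR : ∀ j : Fin k, (eR j).1 = G' j := fun j => rfl
    set j := (eL.trans (sw.trans eR.symm)) i with hj
    have hRj : eR j = sw (eL i) := by
      simp [hj, Equiv.trans_apply]
    have hGj : G' j = (eL i).2.1 := by
      rw [← hR j, hRj]; rfl
    have hpos : m (eL i).1 (eL i).2.1 ≠ 0 := (eL i).2.2.pos.ne'
    have := hm (eL i).1 (eL i).2.1 hpos
    rw [hGj]
    exact this
  · rintro ⟨hne, σ, hσ⟩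
    refine ⟨hne, fun u w => (univ.filter fun i => F i = u ∧ G' (σ i) = w).card,
      fun u w h => ?_, fun u => ?_, fun w => ?_⟩
    · obtain ⟨i, hi⟩ := Finset.card_ne_zero.mp h
      simp only [mem_filter, mem_univ, true_and] at hi
      rw [← hi.1, ← hi.2]
      exact hσ i
    · have h := Finset.card_eq_sum_card_fiberwise
        (s := univ.filter fun i => F i = u) (t := univ) (f := fun i => G' (σ i))
        (fun x _ => mem_univ _)
      simp only [Finset.filter_filter] at h
      show _ = (toConfig F).1 u
      simp only [toConfig]
      rw [h]
    · have h := Finset.card_eq_sum_card_fiberwise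
        (s := univ.filter fun i => G' (σ i) = w) (t := univ) (f := F)
        (fun x _ => mem_univ _)
      simp only [Finset.filter_filter] at h
      have hcard : (univ.filter fun i => G' (σ i) = w).card
          = (univ.filter fun j => G' j = w).card := by
        apply Finset.card_bij (fun i _ => σ i)
        · intro a ha; simp only [mem_filter, mem_univ, true_and] at ha ⊢; exact ha
        · intro a _ b _ hab; exact σ.injective hab
        · intro b hb
          refine ⟨σ.symm b, ?_, by simp⟩
          simp only [mem_filter, mem_univ, true_and] at hb ⊢
          simpa using hb
      show _ = (toConfig G').1 w
      simp only [toConfig]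
      rw [← hcard, h]
      apply Finset.sum_congr rfl
      intro u _
      congr 1
      ext i
      simp [and_comm]
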